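/- arXiv:1103.3727 — 2 statements merged into one kernel-verified Lean document; each statement's English description precedes it below -/
import Mathlib

section
/- For all k ≥ 0 and ℓ > 0, the alternating sum ∑_{s=0}^{ℓ} (-1)^{ℓ-s} u^{binom(ℓ-s,2)} · [k+2s choose s]_u · [k+ℓ+s choose ℓ-s]_u · [k+2ℓ]/[k+ℓ+s] equals 0, where [m] is the u-integer and [a choose b]_u the Gaussian binomial coefficient. -/
open Finset

noncomputable section

/-- The field of rational functions in the variable `u`. -/
abbrev K : Type := RatFunc ℚ

/-- The variable `u`. -/
def u : K := RatFunc.X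

/-- The u-integer `[m] = 1 + u + ... + u^{m-1}`. -/
def qint (m : ℕ) : K := ∑ i ∈ range m, u ^ i

/-- The u-factorial `[m]! = [1][2]⋯[m]`. -/
def qfact (m : ℕ) : K := ∏ i ∈ range m, qint (i + 1)

/-- The Gaussian binomial coefficient `[a choose b]_u`, zero for `b > a`. -/
def qbinom (a b : ℕ) : K :=
  if b ≤ a then qfact a / (qfact b * qfact (a - b)) else 0

lemma qint_ne_zero {m : ℕ} (hm : 0 < m) : qint m ≠ 0 := by
  have h : qint m = algebraMap (Polynomial ℚ) K (∑ i ∈ range m, Polynomial.X ^ i) := by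
    simp [qint, u, map_sum, map_pow, RatFunc.algebraMap_X]
  rw [h]
  apply RatFunc.algebraMap_ne_zero
  intro hp
  have h1 := congrArg (Polynomial.eval 1) hp
  simp [Polynomial.eval_finset_sum] at h1
  omega

lemma qfact_ne_zero (m : ℕ) : qfact m ≠ 0 := by
  unfold qfact
  exact Finset.prod_ne_zero_iff.mpr fun i _ => qint_ne_zero (Nat.succ_pos i)

lemma qfact_succ (m : ℕ) : qfact (m + 1) = qfact m * qint (m + 1) := prod_range_succ _ m

lemma qint_add (a b : ℕ) : qint (a + b) = qint a + u ^ a * qint b := by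
  unfold qint
  rw [Finset.sum_range_add, Finset.mul_sum]
  congr 1
  exact Finset.sum_congr rfl fun i _ => by rw [pow_add]

lemma qfact_zero : qfact 0 = 1 := by simp [qfact]

lemma qbinom_zero (a : ℕ) : qbinom a 0 = 1 := by
  rw [qbinom, if_pos (Nat.zero_le a)]
  simp [qfact_zero, div_self (qfact_ne_zero a)]

lemma qbinom_eq_zero {a b : ℕ} (h : a < b) : qbinom a b = 0 := by
  simp [qbinom, Nat.not_le.mpr h]

lemma qbinom_self (a : ℕ) : qbinom a a = 1 := by
  rw [qbinom, if_pos le_rfl]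
  simp [qfact_zero, div_self (qfact_ne_zero a)]

lemma qbinom_pascal (a b : ℕ) (h : b ≤ a) :
    qbinom (a + 1) (b + 1) = qbinom a (b + 1) + u ^ (a - b) * qbinom a b := by
  rcases eq_or_lt_of_le h with rfl | hlt
  · rw [qbinom_self, qbinom_self, qbinom_eq_zero (Nat.lt_succ_self b)]
    simp
  · obtain ⟨c, rfl⟩ : ∃ c, a = b + c + 1 := ⟨a - b - 1, by omega⟩
    have h1 : b + 1 ≤ b + c + 1 := by omega
    have h2 : b + 1 ≤ b + c + 1 + 1 := by omega
    have h3 : b ≤ b + c + 1 := by omega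
    rw [qbinom, qbinom, qbinom, if_pos h1, if_pos h2, if_pos h3]
    have e1 : b + c + 1 + 1 - (b + 1) = c + 1 := by omega
    have e2 : b + c + 1 - (b + 1) = c := by omega
    have e3 : b + c + 1 - b = c + 1 := by omega
    have e4 : b + c + 1 - b - 1 = c := by omega
    rw [e1, e2, e3]
    have key : qint (b + c + 1 + 1) = qint (b + 1) + u ^ (b + 1) * qint (c + 1) := by
      have := qint_add (b + 1) (c + 1); rw [← this]; ring_nf
    rw [qfact_succ (b + c + 1), qfact_succ b, qfact_succ c]
    have hb := qfact_ne_zero b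
    have hc := qfact_ne_zero c
    have hbc := qfact_ne_zero (b + c + 1)
    have hib := qint_ne_zero (Nat.succ_pos b)
    have hic := qint_ne_zero (Nat.succ_pos c)
    field_simp
    have sym : qint (b+1) + u^(b+1) * qint (c+1) = qint (c+1) + u^(c+1) * qint (b+1) := by
      rw [← qint_add, ← qint_add, show b+1+(c+1) = c+1+(b+1) by omega]
    linear_combination key + sym

lemma qbinom_def {a b : ℕ} (h : b ≤ a) : qbinom a b = qfact a / (qfact b * qfact (a - b)) :=
  if_pos h

lemma core (k s t : ℕ) (h : 0 < s + t) :
    qbinom (k + 2*s) s * qbinom (k + 2*s + t) t * (qint (k + 2*s + 2*t) / qint (k + 2*s + t)) =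
    (qint (k + 2*s + 2*t) / qint (s + t)) * (qbinom (s + t) t * qbinom (k + 2*s + t - 1) (s + t - 1)) := by
  rcases t with _ | t'
  · -- t = 0
    obtain ⟨s', rfl⟩ : ∃ s', s = s' + 1 := ⟨s - 1, by omega⟩
    simp only [Nat.add_zero, Nat.mul_zero, qbinom_zero, Nat.add_succ_sub_one]
    rw [qbinom_def (show s' + 1 ≤ k + 2*(s'+1) by omega),
        qbinom_def (show s' ≤ k + 2*(s'+1) - 1 by omega)]
    rw [show k + 2*(s'+1) - (s'+1) = k + s' + 1 by omega,
        show k + 2*(s'+1) - 1 - s' = k + s' + 1 by omega,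
        show k + 2*(s'+1) - 1 = k + 2*s' + 1 by omega,
        show k + 2*(s'+1) = (k + 2*s' + 1) + 1 by omega]
    rw [qfact_succ (k + 2*s' + 1), qfact_succ s']
    have h1 := qfact_ne_zero s'
    have h2 := qfact_ne_zero (k + s' + 1)
    have h3 := qfact_ne_zero (k + 2*s' + 1)
    have h4 := qint_ne_zero (show 0 < s' + 1 by omega)
    have h5 := qint_ne_zero (show 0 < k + 2*s' + 1 + 1 by omega)
    field_simp
  · -- t = t' + 1
    rw [qbinom_def (show s ≤ k + 2*s by omega),
        qbinom_def (show t' + 1 ≤ k + 2*s + (t'+1) by omega),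
        qbinom_def (show t' + 1 ≤ s + (t'+1) by omega),
        qbinom_def (show s + (t'+1) - 1 ≤ k + 2*s + (t'+1) - 1 by omega)]
    rw [show k + 2*s - s = k + s by omega,
        show k + 2*s + (t'+1) - (t'+1) = k + 2*s by omega,
        show s + (t'+1) - (t'+1) = s by omega,
        show s + (t'+1) - 1 = s + t' by omega,
        show k + 2*s + (t'+1) - 1 = k + 2*s + t' by omega,
        show k + 2*s + t' - (s + t') = k + s by omega,
        show k + 2*s + (t'+1) = (k + 2*s + t') + 1 by rfl,
        show s + (t'+1) = (s + t') + 1 by rfl]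
    rw [qfact_succ (k + 2*s + t'), qfact_succ (s + t')]
    have h1 := qfact_ne_zero s
    have h2 := qfact_ne_zero (k + s)
    have h3 := qfact_ne_zero (t' + 1)
    have h4 := qfact_ne_zero (k + 2*s + t')
    have h5 := qfact_ne_zero (s + t')
    have h6 := qint_ne_zero (show 0 < k + 2*s + t' + 1 by omega)
    have h7 := qint_ne_zero (show 0 < s + t' + 1 by omega)
    have h8 := qint_ne_zero (show (0:ℕ) < k + 2*s + 2*(t'+1) by omega)
    field_simp
    rw [div_self (qfact_ne_zero (k + 2*s))]

def Psum (l n m : ℕ) : K :=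
  ∑ j ∈ range (l + 1), (-1 : K) ^ j * u ^ (j.choose 2) * qbinom l j * qbinom (m - j) n

lemma Psum_rec (l n m : ℕ) : Psum (l + 1) n m = Psum l n m - u ^ l * Psum l n (m - 1) := by
  unfold Psum
  rw [Finset.sum_range_succ' (fun j => (-1 : K) ^ j * u ^ (j.choose 2) * qbinom (l+1) j * qbinom (m - j) n) (l+1)]
  have h1 : ∀ i ∈ range (l + 1),
      (-1 : K) ^ (i+1) * u ^ ((i+1).choose 2) * qbinom (l+1) (i+1) * qbinom (m - (i+1)) n
      = ((-1 : K) ^ (i+1) * u ^ ((i+1).choose 2) * qbinom l (i+1) * qbinom (m - (i+1)) n)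
        + (-(u ^ l)) * ((-1 : K) ^ i * u ^ (i.choose 2) * qbinom l i * qbinom (m - 1 - i) n) := by
    intro i hi
    rw [qbinom_pascal l i (by simp at hi; omega)]
    have e1 : (i+1).choose 2 = i.choose 2 + i := by
      rw [Nat.choose_succ_succ]
      simp [Nat.choose_one_right]; omega
    have e2 : m - (i + 1) = m - 1 - i := by omega
    have hle : i ≤ l := by simp at hi; omega
    have e3 : i.choose 2 + i + (l - i) = i.choose 2 + l := by omega
    rw [e1, e2]
    rw [pow_succ (-1 : K) i]
    have : u ^ (i.choose 2 + i) * (u ^ (l - i) * qbinom l i) = u ^ l * (u ^ (i.choose 2) * qbinom l i) := by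
      rw [← mul_assoc, ← pow_add, e3, pow_add]; ring
    linear_combination ((-1:K)^i * (-1) * qbinom (m-1-i) n) * this
  rw [Finset.sum_congr rfl h1, Finset.sum_add_distrib, ← Finset.mul_sum]
  have h2 : ∑ i ∈ range (l+1), (-1 : K) ^ (i+1) * u ^ ((i+1).choose 2) * qbinom l (i+1) * qbinom (m - (i+1)) n
      = ∑ j ∈ range (l+1), (-1 : K) ^ j * u ^ (j.choose 2) * qbinom l j * qbinom (m - j) n
        - (-1 : K) ^ 0 * u ^ ((0:ℕ).choose 2) * qbinom l 0 * qbinom (m - 0) n := by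
    rw [Finset.sum_range_succ' (fun j => (-1 : K) ^ j * u ^ (j.choose 2) * qbinom l j * qbinom (m - j) n) l]
    rw [Finset.sum_range_succ]
    rw [qbinom_eq_zero (Nat.lt_succ_self l)]
    ring
  rw [h2]
  simp [qbinom_zero]
  ring

lemma Psum_closed : ∀ l n m : ℕ, l ≤ n → n + l ≤ m →
    Psum l n m = u ^ (l * (m - n)) * qbinom (m - l) (n - l) := by
  intro l
  induction l with
  | zero =>
    intro n m _ _
    simp [Psum, qbinom_zero, qbinom_self]
  | succ l ih =>
    intro n m hln hm
    rw [Psum_rec]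
    rw [ih n m (by omega) (by omega), ih n (m-1) (by omega) (by omega)]
    obtain ⟨p, hp⟩ : ∃ p, n = l + 1 + p := ⟨n - l - 1, by omega⟩
    obtain ⟨q, hq⟩ : ∃ q, m = n + l + 1 + q := ⟨m - n - l - 1, by omega⟩
    subst hp; subst hq
    have e1 : l + 1 + p + l + 1 + q - (l + 1 + p) = l + 1 + q := by omega
    have e2 : l + 1 + p + l + 1 + q - l = (l + 1 + p + q) + 1 := by omega
    have e3 : l + 1 + p - l = p + 1 := by omega
    have e4 : l + 1 + p + l + 1 + q - 1 - (l + 1 + p) = l + q := by omega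
    have e5 : l + 1 + p + l + 1 + q - 1 - l = l + 1 + p + q := by omega
    have e6 : l + 1 + p + l + 1 + q - (l + 1) = l + 1 + p + q := by omega
    have e7 : l + 1 + p - (l + 1) = p := by omega
    rw [e1, e2, e3, e4, e5, e6, e7]
    rw [qbinom_pascal (l + 1 + p + q) p (by omega)]
    have e8 : l + 1 + p + q - p = l + 1 + q := by omega
    rw [e8]
    rw [show (l+1) * (l + 1 + q) = l * (l + q) + l + (l + 1 + q) by ring]
    rw [show l * (l + 1 + q) = l * (l + q) + l by ring]
    rw [pow_add, pow_add, pow_add]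
    ring

lemma Psum_succ_diag_eq_zero (n m : ℕ) (h : 2 * n + 1 ≤ m) : Psum (n + 1) n m = 0 := by
  rw [Psum_rec]
  rw [Psum_closed n n m le_rfl (by omega), Psum_closed n n (m-1) le_rfl (by omega)]
  simp only [Nat.sub_self, qbinom_zero, mul_one]
  rw [show n * (m - n) = n + n * (m - 1 - n) by
    have : m - n = (m - 1 - n) + 1 := by omega
    rw [this]; ring]
  rw [pow_add]
  ring

/-- For `k ≥ 0` and `ℓ > 0`, the alternating sum
`∑_{s=0}^{ℓ} (-1)^{ℓ-s} u^{binom(ℓ-s,2)} [k+2s choose s]_u [k+ℓ+s choose ℓ-s]_u [k+2ℓ]/[k+ℓ+s]`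
vanishes; this expresses that the matrix `A_{k,k+2ℓ} = [k+2ℓ choose ℓ]_u` has the inverse
`B_{k,k+2ℓ} = (-1)^ℓ u^{binom(ℓ,2)} ([k+2ℓ]/[k+ℓ]) [k+ℓ choose ℓ]_u`. -/
theorem alternating_sum_zero (k ℓ : ℕ) (hℓ : 0 < ℓ) :
    ∑ s ∈ range (ℓ + 1),
      (-1 : K) ^ (ℓ - s) * u ^ ((ℓ - s).choose 2) * qbinom (k + 2 * s) s *
        qbinom (k + ℓ + s) (ℓ - s) * (qint (k + 2 * ℓ) / qint (k + ℓ + s)) = 0 := by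
  rw [← Finset.sum_range_reflect]
  simp only [Nat.add_sub_cancel]
  have key : ∀ j ∈ range (ℓ + 1),
      (-1 : K) ^ (ℓ - (ℓ - j)) * u ^ ((ℓ - (ℓ - j)).choose 2) * qbinom (k + 2 * (ℓ - j)) (ℓ - j) *
        qbinom (k + ℓ + (ℓ - j)) (ℓ - (ℓ - j)) * (qint (k + 2 * ℓ) / qint (k + ℓ + (ℓ - j)))
      = (qint (k + 2 * ℓ) / qint ℓ) *
          ((-1 : K) ^ j * u ^ (j.choose 2) * qbinom ℓ j * qbinom (k + 2 * ℓ - 1 - j) (ℓ - 1)) := by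
    intro j hj
    have hj' : j ≤ ℓ := by simp at hj; omega
    rw [Nat.sub_sub_self hj']
    have hc := core k (ℓ - j) j (by omega)
    rw [show k + 2*(ℓ-j) + j - 1 = k + 2*ℓ - 1 - j by omega,
        show k + 2*(ℓ-j) + 2*j = k + 2*ℓ by omega,
        show ℓ - j + j - 1 = ℓ - 1 by omega,
        show ℓ - j + j = ℓ by omega,
        show k + 2*(ℓ-j) + j = k + ℓ + (ℓ - j) by omega] at hc
    linear_combination ((-1:K)^j * u^(j.choose 2)) * hc
  rw [Finset.sum_congr rfl key, ← Finset.mul_sum]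
  have hP : Psum ℓ (ℓ - 1) (k + 2 * ℓ - 1) = 0 := by
    obtain ⟨n, rfl⟩ : ∃ n, ℓ = n + 1 := ⟨ℓ - 1, by omega⟩
    have := Psum_succ_diag_eq_zero n (k + 2 * (n + 1) - 1) (by omega)
    simpa using this
  have : ∑ j ∈ range (ℓ + 1),
      (-1 : K) ^ j * u ^ (j.choose 2) * qbinom ℓ j * qbinom (k + 2 * ℓ - 1 - j) (ℓ - 1) = 0 := by
    rw [← hP]
    unfold Psum
    exact Finset.sum_congr rfl fun j _ => by rw [show k + 2*ℓ - 1 - j = (k + 2*ℓ - 1) - j from rfl]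
  rw [this, mul_zero]

end
end

section
/- Setting g^r_n(q,y) := (1/n)·∑_{p ≥ n-r, ℓ ≥ r} (p+ℓ)·binom(n+ℓ-r-1, n-1)·binom(p+r-1, n-1)·y^{p-ℓ}·q^{pℓ} as a formal series, one has the duality g^r_n(q,y) = g^{n-r}_n(q, y^{-1}) for all 0 ≤ r ≤ n. -/
open Finset

/-- Coefficient of `y^a q^m` in the higher stable pair series
`g^r_n(q,y) = (1/n)·∑_{p≥n-r, ℓ≥r} (p+ℓ)·binom(n+ℓ-r-1,n-1)·binom(p+r-1,n-1)·y^{p-ℓ}q^{pℓ}`: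
only the finitely many pairs `(p,ℓ)` with `p-ℓ = a`, `pℓ = m` contribute. -/
def gCoeff (n r : ℕ) (a : ℤ) (m : ℕ) : ℚ :=
  (1 / (n : ℚ)) *
    ∑ pl ∈ (range (m + a.natAbs + 2) ×ˢ range (m + a.natAbs + 2)).filter
        (fun pl => n - r ≤ pl.1 ∧ r ≤ pl.2 ∧ pl.1 * pl.2 = m ∧ (pl.1 : ℤ) - (pl.2 : ℤ) = a),
      ((pl.1 : ℚ) + (pl.2 : ℚ)) * ((n + pl.2 - r - 1).choose (n - 1) : ℚ) *
        ((pl.1 + r - 1).choose (n - 1) : ℚ)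

/-- The duality `g^r_n(q,y) = g^{n-r}_n(q,y⁻¹)` for `0 ≤ r ≤ n`, stated coefficientwise:
the coefficient of `y^a q^m` in `g^r_n` equals the coefficient of `y^{-a} q^m` in `g^{n-r}_n`. -/
theorem g_duality (n r : ℕ) (hn : 1 ≤ n) (hr : r ≤ n) (a : ℤ) (m : ℕ) :
    gCoeff n r a m = gCoeff n (n - r) (-a) m := by
  unfold gCoeff
  congr 1
  refine Finset.sum_nbij' (fun pl => (pl.2, pl.1)) (fun pl => (pl.2, pl.1)) ?_ ?_ ?_ ?_ ?_
  · rintro ⟨p, l⟩ h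
    simp only [mem_filter, mem_product, mem_range, Int.natAbs_neg] at h ⊢
    obtain ⟨⟨hp, hl⟩, h1, h2, h3, h4⟩ := h
    refine ⟨⟨hl, hp⟩, ?_, ?_, by rw [Nat.mul_comm]; exact h3, by omega⟩ <;> omega
  · rintro ⟨p, l⟩ h
    simp only [mem_filter, mem_product, mem_range, Int.natAbs_neg] at h ⊢
    obtain ⟨⟨hp, hl⟩, h1, h2, h3, h4⟩ := h
    refine ⟨⟨hl, hp⟩, ?_, ?_, by rw [Nat.mul_comm]; exact h3, by omega⟩ <;> omega
  · rintro ⟨p, l⟩ _; rfl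
  · rintro ⟨p, l⟩ _; rfl
  · rintro ⟨p, l⟩ h
    simp only [mem_filter, mem_product, mem_range] at h
    obtain ⟨⟨hp, hl⟩, h1, h2, h3, h4⟩ := h
    have e1 : n + p - (n - r) - 1 = p + r - 1 := by omega
    have e2 : l + (n - r) - 1 = n + l - r - 1 := by omega
    rw [e1, e2]
    ring
end
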